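/- arXiv:1812.02058 — 4 statements merged into one kernel-verified Lean document; each statement's English description precedes it below -/
import Mathlib

section
/- Let d ≥ 1, let φ₀ : ℝ^d → ℝ be a nonnegative upper semicontinuous function, and let r > 0, ε ≥ 0. Then ∫_{ℝ^d} sup_{y ∈ x + [-(r+ε), r+ε]^d} φ₀(y) dx ≤ ((r+ε)/r)^d · ∫_{ℝ^d} sup_{y ∈ x + [-r, r]^d} φ₀(y) dx (with the convention that the inequality holds trivially if the right-hand side is infinite). -/
open MeasureTheory Set Pointwise

lemma mem_add_Icc {A : Set ℝ} {ρ x : ℝ} :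
    x ∈ A + Icc (-ρ) ρ ↔ ∃ b ∈ A, |x - b| ≤ ρ := by
  constructor
  · rintro ⟨b, hb, t, ht, rfl⟩
    refine ⟨b, hb, ?_⟩
    show |b + t - b| ≤ ρ
    rw [abs_le]
    constructor <;> [linarith [ht.1]; linarith [ht.2]]
  · rintro ⟨b, hb, h⟩
    rw [abs_le] at h
    exact ⟨b, hb, x - b, ⟨by linarith [h.1], by linarith [h.2]⟩, by ring⟩

lemma mem_add_Ioo {A : Set ℝ} {ρ x : ℝ} :
    x ∈ A + Ioo (-ρ) ρ ↔ ∃ b ∈ A, |x - b| < ρ := by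
  constructor
  · rintro ⟨b, hb, t, ht, rfl⟩
    refine ⟨b, hb, ?_⟩
    show |b + t - b| < ρ
    rw [abs_lt]
    constructor <;> [linarith [ht.1]; linarith [ht.2]]
  · rintro ⟨b, hb, h⟩
    rw [abs_lt] at h
    exact ⟨b, hb, x - b, ⟨by linarith [h.1], by linarith [h.2]⟩, by ring⟩

lemma measurableSet_finset_add_Icc (A : Finset ℝ) (ρ : ℝ) :
    MeasurableSet ((A : Set ℝ) + Icc (-ρ) ρ) := by
  have : (A : Set ℝ) + Icc (-ρ) ρ = ⋃ b ∈ A, Icc (b - ρ) (b + ρ) := by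
    ext x
    simp only [mem_add_Icc, mem_iUnion, mem_Icc, abs_le, exists_prop]
    constructor
    · rintro ⟨b, hb, h1, h2⟩; exact ⟨b, hb, by linarith, by linarith⟩
    · rintro ⟨b, hb, h1, h2⟩; exact ⟨b, hb, by linarith, by linarith⟩
  rw [this]
  exact A.measurableSet_biUnion fun b _ => measurableSet_Icc

lemma finset_oneD {r s : ℝ} (hr : 0 < r) (hrs : r ≤ s) (A : Finset ℝ) :
    volume ((A : Set ℝ) + Icc (-s) s)
      ≤ ENNReal.ofReal (s / r) * volume ((A : Set ℝ) + Icc (-r) r) := by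
  have hs : 0 < s := lt_of_lt_of_le hr hrs
  induction A using Finset.induction_on_max with
  | empty => simp
  | insert a A ha ih =>
    rcases A.eq_empty_or_nonempty with rfl | hA
    · -- singleton case
      have hsingle : ∀ ρ : ℝ, (↑(insert a (∅ : Finset ℝ)) : Set ℝ) + Icc (-ρ) ρ
          = Icc (a - ρ) (a + ρ) := by
        intro ρ
        ext x
        simp only [mem_add_Icc, Finset.coe_insert, Finset.coe_empty, mem_insert_iff,
          mem_empty_iff_false, or_false, exists_eq_left, mem_Icc, abs_le]
        constructor
        · rintro ⟨h1, h2⟩; exact ⟨by linarith, by linarith⟩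
        · rintro ⟨h1, h2⟩; exact ⟨by linarith, by linarith⟩
      rw [hsingle s, hsingle r, Real.volume_Icc, Real.volume_Icc,
        ← ENNReal.ofReal_mul (by positivity)]
      apply ENNReal.ofReal_le_ofReal
      have hmul : s / r * (a + r - (a - r)) = 2 * s := by field_simp; ring
      rw [hmul]; linarith
    · -- general insert case
      set a' := A.max' hA with ha'
      have ha'A : a' ∈ A := A.max'_mem hA
      have haa' : a' < a := ha a' ha'A
      have hle : ∀ b ∈ A, b ≤ a' := fun b hb => A.le_max' b hb
      -- per-radius upper/lower bounds
      have up : ∀ ρ : ℝ, 0 < ρ → volume ((↑(insert a A) : Set ℝ) + Icc (-ρ) ρ)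
          ≤ volume ((A : Set ℝ) + Icc (-ρ) ρ) + ENNReal.ofReal (min (2*ρ) (a - a')) := by
        intro ρ hρ
        have hsub : (↑(insert a A) : Set ℝ) + Icc (-ρ) ρ
            ⊆ ((A : Set ℝ) + Icc (-ρ) ρ) ∪ Icc (max (a - ρ) (a' + ρ)) (a + ρ) := by
          intro x hx
          rcases mem_add_Icc.1 hx with ⟨b, hb, hxb⟩
          rw [Finset.coe_insert, mem_insert_iff] at hb
          rcases hb with hba | hb
          · subst hba
            rw [abs_le] at hxb
            by_cases hcase : x ≤ a' + ρ
            · left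
              refine mem_add_Icc.2 ⟨a', ha'A, ?_⟩
              rw [abs_le]
              constructor <;> linarith [hxb.1]
            · right
              push_neg at hcase
              refine Set.mem_Icc.2 ⟨max_le (by linarith [hxb.1]) hcase.le, by linarith [hxb.2]⟩
          · exact Or.inl (mem_add_Icc.2 ⟨b, hb, hxb⟩)
        calc volume ((↑(insert a A) : Set ℝ) + Icc (-ρ) ρ)
            ≤ volume (((A : Set ℝ) + Icc (-ρ) ρ) ∪ Icc (max (a - ρ) (a' + ρ)) (a + ρ)) :=
              measure_mono hsub
          _ ≤ volume ((A : Set ℝ) + Icc (-ρ) ρ) + volume (Icc (max (a - ρ) (a' + ρ)) (a + ρ)) :=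
              measure_union_le _ _
          _ = volume ((A : Set ℝ) + Icc (-ρ) ρ) + ENNReal.ofReal (min (2*ρ) (a - a')) := by
              rw [Real.volume_Icc]
              congr 1
              congr 1
              rcases le_total (a - ρ) (a' + ρ) with h | h
              · rw [max_eq_right h, min_eq_right (by linarith)]; ring
              · rw [max_eq_left h, min_eq_left (by linarith)]; ring
      have low : ∀ ρ : ℝ, 0 < ρ → volume ((A : Set ℝ) + Icc (-ρ) ρ)
            + ENNReal.ofReal (min (2*ρ) (a - a'))
          ≤ volume ((↑(insert a A) : Set ℝ) + Icc (-ρ) ρ) := by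
        intro ρ hρ
        have hsub : ((A : Set ℝ) + Icc (-ρ) ρ) ∪ Ioc (max (a - ρ) (a' + ρ)) (a + ρ)
            ⊆ (↑(insert a A) : Set ℝ) + Icc (-ρ) ρ := by
          rintro x (hx | hx)
          · rcases mem_add_Icc.1 hx with ⟨b, hb, hxb⟩
            exact mem_add_Icc.2 ⟨b, by simp [hb], hxb⟩
          · refine mem_add_Icc.2 ⟨a, by simp, ?_⟩
            rw [abs_le]
            have h1 := hx.1
            have h2 := hx.2
            have := le_max_left (a - ρ) (a' + ρ)
            constructor <;> linarith
        have hdisj : Disjoint ((A : Set ℝ) + Icc (-ρ) ρ) (Ioc (max (a - ρ) (a' + ρ)) (a + ρ)) := by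
          rw [Set.disjoint_left]
          intro x hx hx'
          rcases mem_add_Icc.1 hx with ⟨b, hb, hxb⟩
          rw [abs_le] at hxb
          have h1 : x ≤ b + ρ := by linarith [hxb.2]
          have h2 : b ≤ a' := hle b hb
          have := hx'.1
          have := le_max_right (a - ρ) (a' + ρ)
          linarith
        calc volume ((A : Set ℝ) + Icc (-ρ) ρ) + ENNReal.ofReal (min (2*ρ) (a - a'))
            = volume ((A : Set ℝ) + Icc (-ρ) ρ)
              + volume (Ioc (max (a - ρ) (a' + ρ)) (a + ρ)) := by
              rw [Real.volume_Ioc]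
              congr 2
              rcases le_total (a - ρ) (a' + ρ) with h | h
              · rw [max_eq_right h, min_eq_right (by linarith)]; ring
              · rw [max_eq_left h, min_eq_left (by linarith)]; ring
          _ = volume (((A : Set ℝ) + Icc (-ρ) ρ) ∪ Ioc (max (a - ρ) (a' + ρ)) (a + ρ)) :=
              (measure_union hdisj measurableSet_Ioc).symm
          _ ≤ volume ((↑(insert a A) : Set ℝ) + Icc (-ρ) ρ) := measure_mono hsub
      -- combine
      have hmin : min (2*s) (a - a') ≤ (s / r) * min (2*r) (a - a') := by
        rcases le_total (a - a') (2*r) with h | h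
        · rw [min_eq_right h, min_eq_right (le_trans h (by linarith))]
          have h1 : 1 ≤ s / r := (one_le_div hr).2 hrs
          nlinarith [sub_nonneg.2 haa'.le]
        · rw [min_eq_left h]
          have hmul : s / r * (2*r) = 2*s := by field_simp
          exact (min_le_left _ _).trans (le_of_eq hmul.symm)
      calc volume ((↑(insert a A) : Set ℝ) + Icc (-s) s)
          ≤ volume ((A : Set ℝ) + Icc (-s) s) + ENNReal.ofReal (min (2*s) (a - a')) := up s hs
        _ ≤ ENNReal.ofReal (s/r) * volume ((A : Set ℝ) + Icc (-r) r)
            + ENNReal.ofReal ((s/r) * min (2*r) (a - a')) :=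
            add_le_add ih (ENNReal.ofReal_le_ofReal hmin)
        _ = ENNReal.ofReal (s/r) * (volume ((A : Set ℝ) + Icc (-r) r)
            + ENNReal.ofReal (min (2*r) (a - a'))) := by
            rw [ENNReal.ofReal_mul (by positivity), mul_add]
        _ ≤ ENNReal.ofReal (s/r) * volume ((↑(insert a A) : Set ℝ) + Icc (-r) r) :=
            mul_le_mul_right (low r hr) _

lemma oneD_open {r s : ℝ} (hr : 0 < r) (hrs : r ≤ s) (A : Set ℝ) :
    volume (A + Ioo (-s) s) ≤ ENNReal.ofReal (s / r) * volume (A + Icc (-r) r) := by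
  have hs : 0 < s := lt_of_lt_of_le hr hrs
  have hUopen : IsOpen (A + Ioo (-s) s) := (isOpen_Ioo).add_left
  rw [hUopen.measure_eq_iSup_isCompact]
  refine iSup_le fun K => iSup_le fun hKU => iSup_le fun hK => ?_
  -- cover K by finitely many intervals around points of A
  have hcover : K ⊆ ⋃ a : A, Ioo ((a : ℝ) - s) ((a : ℝ) + s) := by
    intro x hx
    rcases mem_add_Ioo.1 (hKU hx) with ⟨b, hb, hxb⟩
    rw [abs_lt] at hxb
    exact Set.mem_iUnion.2 ⟨⟨b, hb⟩, by constructor <;> [linarith [hxb.1]; linarith [hxb.2]]⟩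
  obtain ⟨t, ht⟩ := hK.elim_finite_subcover (fun a : A => Ioo ((a : ℝ) - s) ((a : ℝ) + s))
    (fun a => isOpen_Ioo) hcover
  set A₀ : Finset ℝ := t.image Subtype.val with hA₀
  have hKsub : K ⊆ (A₀ : Set ℝ) + Icc (-s) s := by
    intro x hx
    have := ht hx
    simp only [Set.mem_iUnion, exists_prop] at this
    obtain ⟨a, hat, hxa⟩ := this
    refine mem_add_Icc.2 ⟨(a : ℝ), ?_, ?_⟩
    · simp only [hA₀, Finset.coe_image, Set.mem_image]
      exact ⟨a, hat, rfl⟩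
    · rw [abs_le]
      rcases hxa with ⟨h1, h2⟩
      constructor <;> linarith
  have hA₀A : (A₀ : Set ℝ) ⊆ A := by
    intro b hb
    simp only [hA₀, Finset.coe_image, Set.mem_image] at hb
    obtain ⟨a, _, rfl⟩ := hb
    exact a.2
  calc volume K ≤ volume ((A₀ : Set ℝ) + Icc (-s) s) := measure_mono hKsub
    _ ≤ ENNReal.ofReal (s / r) * volume ((A₀ : Set ℝ) + Icc (-r) r) := finset_oneD hr hrs A₀
    _ ≤ ENNReal.ofReal (s / r) * volume (A + Icc (-r) r) :=
        mul_le_mul_right (measure_mono (Set.add_subset_add_right hA₀A)) _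

lemma oneD {r s : ℝ} (hr : 0 < r) (hrs : r ≤ s) (A : Set ℝ) :
    volume (A + Icc (-s) s) ≤ ENNReal.ofReal (s / r) * volume (A + Icc (-r) r) := by
  have hs : 0 < s := lt_of_lt_of_le hr hrs
  set M := volume (A + Icc (-r) r) with hM
  have key : ∀ δ : ℝ, 0 < δ →
      volume (A + Icc (-s) s) ≤ ENNReal.ofReal ((s + δ) / r) * M := by
    intro δ hδ
    have hsub : A + Icc (-s) s ⊆ A + Ioo (-(s + δ)) (s + δ) :=
      Set.add_subset_add_left (Icc_subset_Ioo (by linarith) (by linarith))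
    exact (measure_mono hsub).trans (oneD_open hr (by linarith) A)
  have htend : Filter.Tendsto (fun δ : ℝ => ENNReal.ofReal ((s + δ) / r) * M)
      (nhdsWithin 0 (Set.Ioi 0)) (nhds (ENNReal.ofReal (s / r) * M)) := by
    have h1 : Filter.Tendsto (fun δ : ℝ => (s + δ) / r) (nhdsWithin 0 (Set.Ioi 0))
        (nhds (s / r)) := by
      have : Filter.Tendsto (fun δ : ℝ => (s + δ) / r) (nhds 0) (nhds ((s + 0) / r)) :=
        ((continuous_const.add continuous_id).div_const r).tendsto 0
      simpa using this.mono_left nhdsWithin_le_nhds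
    exact (ENNReal.Tendsto.mul_const
      ((ENNReal.continuous_ofReal.tendsto _).comp h1)
      (Or.inl (by simp [ENNReal.ofReal_eq_zero, not_le]; positivity)))
  refine ge_of_tendsto htend ?_
  filter_upwards [self_mem_nhdsWithin] with δ hδ
  exact key δ hδ

def RBox {d : ℕ} (τ : Fin d → ℝ) : Set (Fin d → ℝ) := {y | ∀ j, |y j| ≤ τ j}

lemma RBox_eq {d : ℕ} (τ : Fin d → ℝ) :
    RBox τ = Set.pi Set.univ (fun j => Icc (-(τ j)) (τ j)) := by
  ext y
  simp only [RBox, Set.mem_setOf_eq, Set.mem_pi, Set.mem_univ, mem_Icc, abs_le, forall_const]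

lemma isCompact_RBox {d : ℕ} (τ : Fin d → ℝ) : IsCompact (RBox τ) := by
  rw [RBox_eq]; exact isCompact_univ_pi fun j => isCompact_Icc

lemma kstep {n : ℕ} (F : Set (Fin (n+1) → ℝ)) (hF : IsClosed F) (τ : Fin (n+1) → ℝ)
    (i : Fin (n+1)) {a b : ℝ} (hb : 0 < b) (hba : b ≤ a) :
    volume (F + RBox (Function.update τ i a))
      ≤ ENNReal.ofReal (a / b) * volume (F + RBox (Function.update τ i b)) := by
  classical
  set e : (Fin (n+1) → ℝ) ≃ᵐ ℝ × (Fin n → ℝ) :=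
    MeasurableEquiv.piFinSuccAbove (fun _ : Fin (n+1) => ℝ) i with he
  set e' : (Fin (n+1) → ℝ) ≃ᵐ (Fin n → ℝ) × ℝ := e.trans MeasurableEquiv.prodComm with he'
  have hswap : MeasurePreserving (MeasurableEquiv.prodComm :
      ℝ × (Fin n → ℝ) ≃ᵐ (Fin n → ℝ) × ℝ) volume volume := by
    rw [Measure.volume_eq_prod, Measure.volume_eq_prod]
    exact Measure.measurePreserving_swap
  have hmp : MeasurePreserving e' volume volume :=
    (volume_preserving_piFinSuccAbove (fun _ : Fin (n+1) => ℝ) i).trans hswap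
  have he'symm : ∀ (w : Fin n → ℝ) (x : ℝ), e'.symm (w, x) = i.insertNth x w := by
    intro w x
    rfl
  -- the slice set
  set A : (Fin n → ℝ) → Set ℝ := fun w =>
    (fun f : Fin (n+1) → ℝ => f i) ''
      {f | f ∈ F ∧ ∀ j : Fin n, |w j - f (i.succAbove j)| ≤ τ (i.succAbove j)} with hA
  have slice_eq : ∀ (c : ℝ) (w : Fin n → ℝ),
      {x : ℝ | i.insertNth x w ∈ F + RBox (Function.update τ i c)} = A w + Icc (-c) c := by
    intro c w
    ext x
    simp only [Set.mem_setOf_eq]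
    constructor
    · rintro ⟨f, hf, v, hv, hfv⟩
      have hxi : f i + v i = x := by
        have := congrFun hfv i
        simpa [Fin.insertNth_apply_same] using this
      have hvi : |v i| ≤ c := by
        have := hv i
        simpa [Function.update_self] using this
      have hconstr : ∀ j : Fin n, |w j - f (i.succAbove j)| ≤ τ (i.succAbove j) := by
        intro j
        have h1 := congrFun hfv (i.succAbove j)
        have h2 := hv (i.succAbove j)
        rw [Function.update_of_ne (Fin.succAbove_ne i j)] at h2
        simp only [Fin.insertNth_apply_succAbove, Pi.add_apply] at h1
        have : w j - f (i.succAbove j) = v (i.succAbove j) := by linarith [h1]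
        rw [this]
        exact h2
      exact ⟨f i, ⟨f, ⟨hf, hconstr⟩, rfl⟩, v i, by rwa [mem_Icc, ← abs_le], hxi⟩
    · rintro ⟨y, ⟨f, ⟨hfF, hfc⟩, rfl⟩, t, ht, hyt⟩
      refine ⟨f, hfF, i.insertNth x w - f, ?_, by ring⟩
      intro j
      by_cases hj : j = i
      · subst hj
        simp only [Pi.sub_apply, Fin.insertNth_apply_same, Function.update_self, abs_le]
        have hx : f j + t = x := hyt
        rw [mem_Icc] at ht
        constructor <;> [linarith [ht.1]; linarith [ht.2]]
      · obtain ⟨j2, rfl⟩ := Fin.exists_succAbove_eq hj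
        rw [Function.update_of_ne (Fin.succAbove_ne i j2)]
        simp only [Pi.sub_apply, Fin.insertNth_apply_succAbove]
        simpa [abs_sub_comm] using hfc j2
  -- volume via slices
  have vol_eq : ∀ c : ℝ, volume (F + RBox (Function.update τ i c))
      = ∫⁻ w : Fin n → ℝ, volume (A w + Icc (-c) c) := by
    intro c
    have hCclosed : IsClosed (F + RBox (Function.update τ i c)) :=
      hF.add_right_of_isCompact (isCompact_RBox _)
    have hCmeas : MeasurableSet (F + RBox (Function.update τ i c)) := hCclosed.measurableSet
    have himg : MeasurableSet (e' '' (F + RBox (Function.update τ i c))) := by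
      rw [MeasurableEquiv.image_eq_preimage_symm]
      exact hCmeas.preimage e'.symm.measurable
    calc volume (F + RBox (Function.update τ i c))
        = volume (e' '' (F + RBox (Function.update τ i c))) := by
          rw [← hmp.measure_preimage himg.nullMeasurableSet,
            Set.preimage_image_eq _ e'.injective]
      _ = ∫⁻ w : Fin n → ℝ, volume (Prod.mk w ⁻¹' (e' '' (F + RBox (Function.update τ i c)))) := by
          rw [Measure.volume_eq_prod, Measure.prod_apply himg]
      _ = ∫⁻ w : Fin n → ℝ, volume (A w + Icc (-c) c) := by
          congr 1
          ext w
          rw [← slice_eq c w]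
          congr 1
          ext x
          rw [Set.mem_preimage, MeasurableEquiv.image_eq_preimage_symm, Set.mem_preimage,
            he'symm, Set.mem_setOf_eq]

  rw [vol_eq a, vol_eq b, ← lintegral_const_mul' _ _ ENNReal.ofReal_ne_top]
  exact lintegral_mono fun w => oneD hb hba (A w)

lemma closed_box {n : ℕ} (F : Set (Fin (n+1) → ℝ)) (hF : IsClosed F) {r s : ℝ}
    (hr : 0 < r) (hrs : r ≤ s) :
    volume (F + RBox (fun _ => s))
      ≤ ENNReal.ofReal ((s/r)^(n+1)) * volume (F + RBox (fun _ => r)) := by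
  classical
  have hsr : 0 ≤ s / r := div_nonneg (le_trans hr.le hrs) hr.le
  have key : ∀ T : Finset (Fin (n+1)),
      volume (F + RBox (fun _ => s)) ≤ ENNReal.ofReal ((s/r)^T.card)
        * volume (F + RBox (fun j => if j ∈ T then r else s)) := by
    intro T
    induction T using Finset.induction_on with
    | empty => simp
    | insert i T hiT ih =>
      have h1 : (fun j => if j ∈ T then r else s)
          = Function.update (fun j => if j ∈ T then r else s) i s := by
        ext j
        rcases eq_or_ne j i with rfl | hj
        · simp [if_neg hiT]
        · rw [Function.update_of_ne hj]
      have h2 : (fun j => if j ∈ insert i T then r else s)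
          = Function.update (fun j => if j ∈ T then r else s) i r := by
        ext j
        rcases eq_or_ne j i with rfl | hj
        · simp
        · rw [Function.update_of_ne hj]
          simp [Finset.mem_insert, hj]
      calc volume (F + RBox (fun _ => s))
          ≤ ENNReal.ofReal ((s/r)^T.card)
            * volume (F + RBox (fun j => if j ∈ T then r else s)) := ih
        _ ≤ ENNReal.ofReal ((s/r)^T.card) * (ENNReal.ofReal (s/r)
            * volume (F + RBox (fun j => if j ∈ insert i T then r else s))) := by
            refine mul_le_mul_right ?_ _
            have hks := kstep F hF (fun j => if j ∈ T then r else s) i hr hrs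
            rw [← h1, ← h2] at hks
            exact hks
        _ = ENNReal.ofReal ((s/r)^(insert i T).card)
            * volume (F + RBox (fun j => if j ∈ insert i T then r else s)) := by
            rw [← mul_assoc, ← ENNReal.ofReal_mul (pow_nonneg hsr _),
              Finset.card_insert_of_notMem hiT, pow_succ]
  have := key Finset.univ
  simpa [Finset.card_univ] using this

lemma geom_lemma {n : ℕ} (F : ℕ → Set (Fin (n+1) → ℝ)) (hF : ∀ k, IsClosed (F k))
    (hmono : Monotone F) {r s : ℝ} (hr : 0 < r) (hrs : r ≤ s) :
    volume ((⋃ k, F k) + RBox (fun _ => s))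
      ≤ ENNReal.ofReal ((s/r)^(n+1)) * volume ((⋃ k, F k) + RBox (fun _ => r)) := by
  have hdistr : ∀ ρ : ℝ, (⋃ k, F k) + RBox (fun _ : Fin (n+1) => ρ)
      = ⋃ k, (F k + RBox (fun _ => ρ)) := by
    intro ρ
    ext x
    constructor
    · rintro ⟨f, hf, v, hv, rfl⟩
      obtain ⟨k, hk⟩ := Set.mem_iUnion.1 hf
      exact Set.mem_iUnion.2 ⟨k, f, hk, v, hv, rfl⟩
    · intro hx
      obtain ⟨k, f, hk, v, hv, rfl⟩ := Set.mem_iUnion.1 hx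
      exact ⟨f, Set.mem_iUnion.2 ⟨k, hk⟩, v, hv, rfl⟩
  rw [hdistr s, hdistr r]
  have hmeas : ∀ k, MeasurableSet (F k + RBox (fun _ : Fin (n+1) => s)) := fun k =>
    ((hF k).add_right_of_isCompact (isCompact_RBox _)).measurableSet
  rw [Directed.measure_iUnion (Monotone.directed_le fun a b hab =>
    Set.add_subset_add_right (hmono hab)) ]
  · refine iSup_le fun k => ?_
    calc volume (F k + RBox (fun _ => s))
        ≤ ENNReal.ofReal ((s/r)^(n+1)) * volume (F k + RBox (fun _ => r)) :=
          closed_box (F k) (hF k) hr hrs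
      _ ≤ ENNReal.ofReal ((s/r)^(n+1)) * volume (⋃ k, (F k + RBox (fun _ => r))) :=
          mul_le_mul_right (measure_mono (Set.subset_iUnion
            (fun k => F k + RBox (fun _ => r)) k)) _

lemma usc_exists_max {X : Type*} [TopologicalSpace X] {φ : X → ℝ} (husc : UpperSemicontinuous φ)
    {K : Set X} (hK : IsCompact K) (hne : K.Nonempty) :
    ∃ y ∈ K, ∀ z ∈ K, φ z ≤ φ y := by
  by_contra h
  push_neg at h
  have hcover : K ⊆ ⋃ z : K, φ ⁻¹' Iio (φ z) := by
    intro x hx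
    obtain ⟨z, hzK, hz⟩ := h x hx
    exact Set.mem_iUnion.2 ⟨⟨z, hzK⟩, hz⟩
  obtain ⟨t, ht⟩ := hK.elim_finite_subcover _ (fun z : K => husc.isOpen_preimage (φ (z : X)))
    hcover
  obtain ⟨x0, hx0⟩ := hne
  have htne : t.Nonempty := by
    have := ht hx0
    simp only [Set.mem_iUnion, exists_prop] at this
    obtain ⟨z, hzt, _⟩ := this
    exact ⟨z, hzt⟩
  obtain ⟨b, hbt, hb⟩ := t.exists_max_image (fun z : K => φ (z : X)) htne
  have := ht b.2
  simp only [Set.mem_iUnion, exists_prop] at this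
  obtain ⟨z, hzt, hz⟩ := this
  exact absurd (hb z hzt) (not_le.2 hz)

/-- Optimal `L^∞_int` inequality (Lemma B of the paper): for nonnegative upper
semicontinuous `φ₀` on `ℝ^d`, `r > 0`, `ε ≥ 0`,
`∫ sup_{Q̄_{r+ε}(x)} φ₀ dx ≤ ((r+ε)/r)^d ∫ sup_{Q̄_r(x)} φ₀ dx`. -/
theorem stmt_0 (d : ℕ) (hd : 1 ≤ d) (φ : (Fin d → ℝ) → ℝ)
    (hpos : ∀ x, 0 ≤ φ x) (husc : UpperSemicontinuous φ)
    (r ε : ℝ) (hr : 0 < r) (hε : 0 ≤ ε) :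
    ∫⁻ x : Fin d → ℝ, ENNReal.ofReal (sSup (φ '' {y | ∀ i, |y i - x i| ≤ r + ε}))
      ≤ ENNReal.ofReal (((r + ε) / r) ^ d) *
        ∫⁻ x : Fin d → ℝ, ENNReal.ofReal (sSup (φ '' {y | ∀ i, |y i - x i| ≤ r})) := by
  obtain ⟨n, rfl⟩ : ∃ n, d = n + 1 := ⟨d - 1, (Nat.succ_pred_eq_of_pos hd).symm⟩
  set s := r + ε with hs
  have hrs : r ≤ s := by simp [hs]; linarith
  have hs0 : 0 < s := lt_of_lt_of_le hr hrs
  -- the cube around x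
  have cube_ne : ∀ (ρ : ℝ), 0 ≤ ρ → ∀ x : Fin (n+1) → ℝ,
      x ∈ {y : Fin (n+1) → ℝ | ∀ i, |y i - x i| ≤ ρ} := by
    intro ρ hρ x i
    simpa using hρ
  have cube_cpt : ∀ (ρ : ℝ) (x : Fin (n+1) → ℝ),
      IsCompact {y : Fin (n+1) → ℝ | ∀ i, |y i - x i| ≤ ρ} := by
    intro ρ x
    have : {y : Fin (n+1) → ℝ | ∀ i, |y i - x i| ≤ ρ}
        = Set.pi Set.univ (fun i => Icc (x i - ρ) (x i + ρ)) := by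
      ext y
      simp only [Set.mem_setOf_eq, Set.mem_pi, Set.mem_univ, mem_Icc, abs_le, forall_const]
      constructor
      · intro h i; obtain ⟨h1, h2⟩ := h i; exact ⟨by linarith, by linarith⟩
      · intro h i; obtain ⟨h1, h2⟩ := h i; exact ⟨by linarith, by linarith⟩
    rw [this]
    exact isCompact_univ_pi fun i => isCompact_Icc
  have hmax : ∀ (ρ : ℝ), 0 ≤ ρ → ∀ x : Fin (n+1) → ℝ,
      ∃ y ∈ {y : Fin (n+1) → ℝ | ∀ i, |y i - x i| ≤ ρ},
        ∀ z ∈ {y : Fin (n+1) → ℝ | ∀ i, |y i - x i| ≤ ρ}, φ z ≤ φ y := fun ρ hρ x =>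
    usc_exists_max husc (cube_cpt ρ x) ⟨x, cube_ne ρ hρ x⟩
  have hbdd : ∀ (ρ : ℝ), 0 ≤ ρ → ∀ x : Fin (n+1) → ℝ,
      BddAbove (φ '' {y : Fin (n+1) → ℝ | ∀ i, |y i - x i| ≤ ρ}) := by
    intro ρ hρ x
    obtain ⟨y, hy, hymax⟩ := hmax ρ hρ x
    exact ⟨φ y, by rintro _ ⟨z, hz, rfl⟩; exact hymax z hz⟩
  have hnn : ∀ (ρ : ℝ), 0 ≤ ρ → ∀ x : Fin (n+1) → ℝ,
      0 ≤ sSup (φ '' {y : Fin (n+1) → ℝ | ∀ i, |y i - x i| ≤ ρ}) := by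
    intro ρ hρ x
    exact le_trans (hpos x) (le_csSup (hbdd ρ hρ x) ⟨x, cube_ne ρ hρ x, rfl⟩)
  -- superlevel set identity
  have hlevel : ∀ (ρ : ℝ), 0 ≤ ρ → ∀ t : ℝ,
      {x : Fin (n+1) → ℝ | t < sSup (φ '' {y | ∀ i, |y i - x i| ≤ ρ})}
        = {y | t < φ y} + RBox (fun _ : Fin (n+1) => ρ) := by
    intro ρ hρ t
    ext x
    constructor
    · intro hx
      obtain ⟨y, hy, hymax⟩ := hmax ρ hρ x
      have hsup_le : sSup (φ '' {y : Fin (n+1) → ℝ | ∀ i, |y i - x i| ≤ ρ}) ≤ φ y :=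
        csSup_le (Set.Nonempty.image φ ⟨x, cube_ne ρ hρ x⟩)
          (by rintro _ ⟨z, hz, rfl⟩; exact hymax z hz)
      refine ⟨y, lt_of_lt_of_le hx hsup_le, x - y, fun i => ?_, by ext i; simp⟩
      show |(x - y) i| ≤ ρ
      rw [Pi.sub_apply, abs_sub_comm]
      exact hy i
    · rintro ⟨y, hy, v, hv, rfl⟩
      refine lt_of_lt_of_le hy (le_csSup (hbdd ρ hρ (y + v)) ⟨y, fun i => ?_, rfl⟩)
      show |y i - (y + v) i| ≤ ρ
      rw [Pi.add_apply]
      have := hv i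
      rw [abs_le] at this ⊢
      constructor <;> [linarith [this.2]; linarith [this.1]]
  -- write the strict superlevel set of φ as a monotone countable union of closed sets
  set Fseq : ℝ → ℕ → Set (Fin (n+1) → ℝ) := fun t k => {y | t + 1/(k+1) ≤ φ y} with hFseq
  have hFclosed : ∀ t k, IsClosed (Fseq t k) := by
    intro t k
    have : Fseq t k = (φ ⁻¹' Iio (t + 1/(k+1)))ᶜ := by
      ext y
      simp [hFseq, not_lt]
    rw [this]
    exact (husc.isOpen_preimage _).isClosed_compl
  have hFmono : ∀ t, Monotone (Fseq t) := by
    intro t k l hkl y hy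
    have h1 : (1 : ℝ)/(l+1) ≤ 1/(k+1) := by
      apply one_div_le_one_div_of_le
      · positivity
      · have : (k : ℝ) ≤ l := Nat.cast_le.2 hkl
        linarith
    simp only [hFseq, Set.mem_setOf_eq] at hy ⊢
    linarith
  have hEt : ∀ t : ℝ, {y : Fin (n+1) → ℝ | t < φ y} = ⋃ k, Fseq t k := by
    intro t
    ext y
    simp only [Set.mem_setOf_eq, Set.mem_iUnion, hFseq]
    constructor
    · intro hy
      obtain ⟨k, hk⟩ := exists_nat_one_div_lt (sub_pos.2 hy)
      exact ⟨k, by push_cast; push_cast at hk; linarith⟩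
    · rintro ⟨k, hk⟩
      have : (0:ℝ) < 1/(k+1) := by positivity
      linarith
  -- measurability of the sup functions
  have hmeasg : ∀ (ρ : ℝ), 0 ≤ ρ →
      Measurable (fun x : Fin (n+1) → ℝ => sSup (φ '' {y | ∀ i, |y i - x i| ≤ ρ})) := by
    intro ρ hρ
    apply measurable_of_Ioi
    intro c
    have : (fun x : Fin (n+1) → ℝ => sSup (φ '' {y | ∀ i, |y i - x i| ≤ ρ})) ⁻¹' Ioi c
        = {x : Fin (n+1) → ℝ | c < sSup (φ '' {y | ∀ i, |y i - x i| ≤ ρ})} := rfl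
    rw [this, hlevel ρ hρ c, hEt c]
    have : (⋃ k, Fseq c k) + RBox (fun _ : Fin (n+1) => ρ)
        = ⋃ k, (Fseq c k + RBox (fun _ : Fin (n+1) => ρ)) := by
      ext x
      constructor
      · rintro ⟨f, hf, v, hv, rfl⟩
        obtain ⟨k, hk⟩ := Set.mem_iUnion.1 hf
        exact Set.mem_iUnion.2 ⟨k, f, hk, v, hv, rfl⟩
      · intro hx
        obtain ⟨k, f, hk, v, hv, rfl⟩ := Set.mem_iUnion.1 hx
        exact ⟨f, Set.mem_iUnion.2 ⟨k, hk⟩, v, hv, rfl⟩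
    rw [this]
    exact MeasurableSet.iUnion fun k =>
      ((hFclosed c k).add_right_of_isCompact (isCompact_RBox _)).measurableSet
  -- layer cake on both sides
  rw [lintegral_eq_lintegral_meas_lt volume
      (Filter.Eventually.of_forall fun x => hnn s hs0.le x) (hmeasg s hs0.le).aemeasurable,
    lintegral_eq_lintegral_meas_lt volume
      (Filter.Eventually.of_forall fun x => hnn r hr.le x) (hmeasg r hr.le).aemeasurable,
    ← lintegral_const_mul' _ _ ENNReal.ofReal_ne_top]
  refine lintegral_mono fun t => ?_
  have h1 : {x : Fin (n+1) → ℝ | t < sSup (φ '' {y | ∀ i, |y i - x i| ≤ s})}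
      = (⋃ k, Fseq t k) + RBox (fun _ : Fin (n+1) => s) := by
    rw [hlevel s hs0.le t, hEt t]
  have h2 : {x : Fin (n+1) → ℝ | t < sSup (φ '' {y | ∀ i, |y i - x i| ≤ r})}
      = (⋃ k, Fseq t k) + RBox (fun _ : Fin (n+1) => r) := by
    rw [hlevel r hr.le t, hEt t]
  rw [h1, h2]
  exact geom_lemma (Fseq t) (hFclosed t) (hFmono t) hr hrs
end

section
/- Let J ⊆ ℝ be a nonempty bounded set and r > 0, ε ≥ 0. Then the Lebesgue measure satisfies λ(J + [-(r+ε), r+ε]) ≤ ((r+ε)/r) · λ(J + [-r, r]). -/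
open MeasureTheory Pointwise

lemma bi_cons (f : ℝ → Set ℝ) (a : ℝ) (l : List ℝ) :
    (⋃ x ∈ a :: l, f x) = f a ∪ ⋃ x ∈ l, f x := by
  ext y
  simp [List.mem_cons, or_and_right, exists_or]

lemma meas_bi (l : List ℝ) (t : ℝ) :
    MeasurableSet (⋃ x ∈ l, Set.Icc (x - t) (x + t)) :=
  MeasurableSet.biUnion l.finite_toSet.countable fun _ _ => measurableSet_Icc

lemma key_min (r s d : ℝ) (hr : 0 < r) (hrs : r ≤ s) (hd : 0 ≤ d) :
    min (2 * s) d ≤ s / r * min (2 * r) d := by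
  rcases le_total d (2 * r) with h | h
  · rw [min_eq_right h]
    have h1 : min (2 * s) d ≤ d := min_le_right _ _
    have : 1 ≤ s / r := (one_le_div hr).mpr hrs
    nlinarith
  · rw [min_eq_left h]
    have : s / r * (2 * r) = 2 * s := by field_simp
    rw [this]
    exact min_le_left _ _

lemma main_list (r s : ℝ) (hr : 0 < r) (hrs : r ≤ s) :
    ∀ l : List ℝ, l.Chain' (· ≤ ·) →
      volume (⋃ x ∈ l, Set.Icc (x - s) (x + s)) ≤
        ENNReal.ofReal (s / r) * volume (⋃ x ∈ l, Set.Icc (x - r) (x + r)) := by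
  intro l
  induction l with
  | nil => simp
  | cons a l ih =>
    intro hchain
    cases l with
    | nil =>
      simp only [List.mem_singleton, Set.iUnion_iUnion_eq_left, Real.volume_Icc]
      rw [← ENNReal.ofReal_mul (div_nonneg (by linarith) hr.le)]
      apply ENNReal.ofReal_le_ofReal
      have : s / r * (a + r - (a - r)) = 2 * s := by field_simp; ring
      rw [this]; linarith
    | cons b tl =>
      obtain ⟨hab, hchain'⟩ := List.isChain_cons_cons.mp hchain
      have hblel : ∀ x ∈ b :: tl, b ≤ x := by
        have hp := List.isChain_iff_pairwise.mp hchain'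
        intro x hx
        rcases List.mem_cons.mp hx with rfl | hx
        · exact le_rfl
        · exact (List.pairwise_cons.mp hp).1 x hx
      have hs0 : 0 < s := lt_of_lt_of_le hr hrs
      set Us : Set ℝ := ⋃ x ∈ b :: tl, Set.Icc (x - s) (x + s) with hUs
      set Ur : Set ℝ := ⋃ x ∈ b :: tl, Set.Icc (x - r) (x + r) with hUr
      have hUrIci : Ur ⊆ Set.Ici (b - r) := by
        intro y hy
        simp only [hUr, Set.mem_iUnion, Set.mem_Icc] at hy
        obtain ⟨x, hx, h1, _⟩ := hy
        have := hblel x hx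
        simp only [Set.mem_Ici]; linarith
      have hcons_s : (⋃ x ∈ a :: b :: tl, Set.Icc (x - s) (x + s)) =
          Set.Icc (a - s) (a + s) ∪ Us := by
        rw [hUs]; exact bi_cons _ _ _
      have hcons_r : (⋃ x ∈ a :: b :: tl, Set.Icc (x - r) (x + r)) =
          Set.Icc (a - r) (a + r) ∪ Ur := by
        rw [hUr]; exact bi_cons _ _ _
      -- upper bound at radius s
      have hsub : Set.Icc (a - s) (a + s) ∪ Us ⊆
          Set.Icc (a - s) (min (a + s) (b - s)) ∪ Us := by
        intro y hy
        rcases hy with hy | hy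
        · rcases le_or_gt y (b - s) with h | h
          · exact Or.inl ⟨hy.1, le_min hy.2 h⟩
          · refine Or.inr ?_
            simp only [hUs, Set.mem_iUnion]
            exact ⟨b, List.mem_cons_self, ⟨h.le, by linarith [hy.2]⟩⟩
        · exact Or.inr hy
      have hupper : volume (Set.Icc (a - s) (a + s) ∪ Us) ≤
          ENNReal.ofReal (min (2 * s) (b - a)) + volume Us := by
        refine le_trans (measure_mono hsub) ?_
        refine le_trans (measure_union_le _ _) ?_
        gcongr
        rw [Real.volume_Icc]
        apply ENNReal.ofReal_le_ofReal
        rcases le_total (a + s) (b - s) with h | h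
        · rw [min_eq_left h]
          have h2 : a + s - (a - s) = 2 * s := by ring
          rw [h2]; exact le_min le_rfl (by linarith)
        · rw [min_eq_right h]
          have h2 : b - s - (a - s) = b - a := by ring
          rw [h2]; exact le_min (by linarith) le_rfl
      -- lower bound at radius r
      have hdisj : Disjoint (Set.Ico (a - r) (min (a + r) (b - r))) Ur := by
        apply Set.disjoint_left.mpr
        intro y hy hy'
        have h1 := hUrIci hy'
        simp only [Set.mem_Ico, lt_min_iff] at hy
        simp only [Set.mem_Ici] at h1
        linarith [hy.2.2]
      have hsub2 : Set.Ico (a - r) (min (a + r) (b - r)) ∪ Ur ⊆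
          Set.Icc (a - r) (a + r) ∪ Ur := by
        apply Set.union_subset_union_left
        intro y hy
        simp only [Set.mem_Ico, lt_min_iff] at hy
        exact ⟨hy.1, hy.2.1.le⟩
      have hlower : ENNReal.ofReal (min (2 * r) (b - a)) + volume Ur ≤
          volume (Set.Icc (a - r) (a + r) ∪ Ur) := by
        refine le_trans ?_ (measure_mono hsub2)
        rw [measure_union hdisj (meas_bi _ _), Real.volume_Ico]
        gcongr
        rcases le_total (a + r) (b - r) with h | h
        · rw [min_eq_left h]
          have h2 : a + r - (a - r) = 2 * r := by ring
          rw [h2]; exact min_le_left _ _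
        · rw [min_eq_right h]
          have h2 : b - r - (a - r) = b - a := by ring
          rw [h2]; exact min_le_right _ _
      rw [hcons_s, hcons_r]
      calc volume (Set.Icc (a - s) (a + s) ∪ Us)
          ≤ ENNReal.ofReal (min (2 * s) (b - a)) + volume Us := hupper
        _ ≤ ENNReal.ofReal (s / r) * ENNReal.ofReal (min (2 * r) (b - a)) +
              ENNReal.ofReal (s / r) * volume Ur := by
            gcongr
            · rw [← ENNReal.ofReal_mul (by positivity)]
              exact ENNReal.ofReal_le_ofReal (key_min r s (b - a) hr hrs (by linarith))
            · exact ih hchain'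
        _ = ENNReal.ofReal (s / r) *
              (ENNReal.ofReal (min (2 * r) (b - a)) + volume Ur) := by ring
        _ ≤ ENNReal.ofReal (s / r) * volume (Set.Icc (a - r) (a + r) ∪ Ur) := by
            gcongr

/-- One-dimensional dilation estimate for Minkowski sums with intervals:
for nonempty bounded `J ⊆ ℝ`, `r > 0`, `ε ≥ 0`,
`λ(J + [-(r+ε), r+ε]) ≤ ((r+ε)/r) · λ(J + [-r, r])`. -/
theorem stmt_1 (J : Set ℝ) (hne : J.Nonempty) (hbd : Bornology.IsBounded J)
    (r ε : ℝ) (hr : 0 < r) (hε : 0 ≤ ε) :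
    volume (J + Set.Icc (-(r + ε)) (r + ε))
      ≤ ENNReal.ofReal ((r + ε) / r) * volume (J + Set.Icc (-r) r) := by
  set s : ℝ := r + ε with hs
  have hrs : r ≤ s := by simp [hs]; linarith
  have hs0 : 0 < s := lt_of_lt_of_le hr hrs
  -- finiteness of RHS measure
  obtain ⟨C, hC⟩ := hbd.exists_norm_le
  have hfin : volume (J + Set.Icc (-r) r) < ⊤ := by
    have hsub : J + Set.Icc (-r) r ⊆ Set.Icc (-(C + r)) (C + r) := by
      rintro z ⟨x, hx, y, hy, rfl⟩
      have h1 := hC x hx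
      rw [Real.norm_eq_abs, abs_le] at h1
      simp only [Set.mem_Icc] at hy ⊢
      constructor <;> linarith [h1.1, h1.2, hy.1, hy.2]
    exact lt_of_le_of_lt (measure_mono hsub) (by rw [Real.volume_Icc]; exact ENNReal.ofReal_lt_top)
  -- for every δ > 0, the bound with s + δ
  have hkey : ∀ δ : ℝ, 0 < δ →
      volume (J + Set.Icc (-s) s) ≤
        ENNReal.ofReal ((s + δ) / r) * volume (J + Set.Icc (-r) r) := by
    intro δ hδ
    have htb : TotallyBounded J :=
      (hbd.isCompact_closure.totallyBounded).subset subset_closure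
    obtain ⟨t, htJ, htfin, htcov⟩ := totallyBounded_iff_subset.mp htb
      {p : ℝ × ℝ | dist p.1 p.2 < δ} (Metric.dist_mem_uniformity hδ)
    -- sorted list of t
    set F := htfin.toFinset with hF
    set l := F.sort (· ≤ ·) with hl
    have hchain : l.Chain' (· ≤ ·) := (Finset.pairwise_sort F _).isChain
    have hmeml : ∀ x : ℝ, x ∈ l ↔ x ∈ t := by
      intro x; rw [hl, Finset.mem_sort, hF, Set.Finite.mem_toFinset]
    have h1 : J + Set.Icc (-s) s ⊆ ⋃ x ∈ l, Set.Icc (x - (s + δ)) (x + (s + δ)) := by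
      rintro z ⟨u, hu, v, hv, rfl⟩
      obtain ⟨x, hx, hux⟩ := Set.mem_iUnion₂.mp (htcov hu)
      simp only [Set.mem_setOf_eq, Real.dist_eq] at hux
      rw [abs_lt] at hux
      simp only [Set.mem_Icc] at hv
      refine Set.mem_iUnion₂.mpr ⟨x, (hmeml x).mpr hx, ?_⟩
      simp only [Set.mem_Icc]
      constructor <;> linarith [hux.1, hux.2, hv.1, hv.2]
    have h2 : (⋃ x ∈ l, Set.Icc (x - r) (x + r)) ⊆ J + Set.Icc (-r) r := by
      intro z hz
      obtain ⟨x, hx, hzx⟩ := Set.mem_iUnion₂.mp hz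
      simp only [Set.mem_Icc] at hzx
      refine ⟨x, htJ ((hmeml x).mp hx), z - x, ?_, by ring⟩
      simp only [Set.mem_Icc]
      constructor <;> linarith [hzx.1, hzx.2]
    calc volume (J + Set.Icc (-s) s)
        ≤ volume (⋃ x ∈ l, Set.Icc (x - (s + δ)) (x + (s + δ))) := measure_mono h1
      _ ≤ ENNReal.ofReal ((s + δ) / r) * volume (⋃ x ∈ l, Set.Icc (x - r) (x + r)) :=
          main_list r (s + δ) hr (by linarith) l hchain
      _ ≤ ENNReal.ofReal ((s + δ) / r) * volume (J + Set.Icc (-r) r) :=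
          mul_le_mul_right (measure_mono h2) _
  -- take the limit δ → 0⁺
  have htend : Filter.Tendsto
      (fun δ : ℝ => ENNReal.ofReal ((s + δ) / r) * volume (J + Set.Icc (-r) r))
      (nhdsWithin 0 (Set.Ioi 0))
      (nhds (ENNReal.ofReal (s / r) * volume (J + Set.Icc (-r) r))) := by
    have hcont : Filter.Tendsto (fun δ : ℝ => ENNReal.ofReal ((s + δ) / r))
        (nhdsWithin 0 (Set.Ioi 0)) (nhds (ENNReal.ofReal (s / r))) := by
      apply Filter.Tendsto.mono_left _ nhdsWithin_le_nhds
      have : Continuous (fun δ : ℝ => ENNReal.ofReal ((s + δ) / r)) := by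
        apply ENNReal.continuous_ofReal.comp
        continuity
      simpa using this.tendsto 0
    exact ENNReal.Tendsto.mul_const hcont
      (Or.inr hfin.ne)
  have := ge_of_tendsto htend (Filter.eventually_of_mem self_mem_nhdsWithin
    (fun δ hδ => hkey δ hδ))
  simpa using this
end

section
/- Let d ≥ 1 and for n ≥ 1 define φ₀ⁿ(x) := max(1 − n|x|, 0) for x ∈ ℝ^d, and for t > 0 define φₙ(x, t) := sup_{y ∈ x + [-t,t]^d} φ₀ⁿ(y). Then φ₀ⁿ → 0 in L¹(ℝ^d) as n → ∞, but for every fixed t > 0, φₙ(·, t) → 𝟙_{[-t,t]^d} in L¹(ℝ^d) as n → ∞; in particular lim_{n→∞} ‖φₙ(·,t)‖_{L¹} = (2t)^d ≠ 0. -/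
open MeasureTheory Filter Topology

lemma coord_le_norm {d : ℕ} (x : EuclideanSpace ℝ (Fin d)) (i : Fin d) : |x i| ≤ ‖x‖ := by
  rw [EuclideanSpace.norm_eq]
  have h1 : |x i| = Real.sqrt (‖x i‖ ^ 2) := by
    rw [Real.sqrt_sq_eq_abs]; simp [abs_abs]
  rw [h1]
  apply Real.sqrt_le_sqrt
  exact Finset.single_le_sum (f := fun j => ‖x j‖ ^ 2) (fun j _ => sq_nonneg _) (Finset.mem_univ i)

lemma cube_eq {d : ℕ} (s : ℝ) :
    {x : EuclideanSpace ℝ (Fin d) | ∀ i, |x i| ≤ s}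
      = (MeasurableEquiv.toLp 2 (Fin d → ℝ)).symm ⁻¹' (Set.univ.pi fun _ => Set.Icc (-s) s) := by
  ext x
  simp only [Set.mem_setOf_eq, Set.mem_preimage, Set.mem_pi, Set.mem_univ, Set.mem_Icc,
    forall_true_left, abs_le]
  rfl

lemma cube_meas {d : ℕ} (s : ℝ) :
    MeasurableSet {x : EuclideanSpace ℝ (Fin d) | ∀ i, |x i| ≤ s} := by
  rw [cube_eq]
  exact (MeasurableSet.univ_pi fun _ => measurableSet_Icc).preimage
    (MeasurableEquiv.toLp 2 (Fin d → ℝ)).symm.measurable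

lemma cube_vol {d : ℕ} (s : ℝ) (hs : 0 ≤ s) :
    volume {x : EuclideanSpace ℝ (Fin d) | ∀ i, |x i| ≤ s} = ENNReal.ofReal ((2*s)^d) := by
  rw [cube_eq, (EuclideanSpace.volume_preserving_symm_measurableEquiv_toLp (Fin d)).measure_preimage
    ((MeasurableSet.univ_pi fun _ => measurableSet_Icc).nullMeasurableSet)]
  rw [volume_pi_pi]
  simp only [Real.volume_Icc, Finset.prod_const, Finset.card_univ, Fintype.card_fin]
  rw [← ENNReal.ofReal_pow (by linarith : (0:ℝ) ≤ s - -s)]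
  ring_nf

abbrev Euc (d : ℕ) := EuclideanSpace ℝ (Fin d)

/-- `L¹` instability for the eikonal equation: `φ₀ⁿ(x) = (1 - n|x|)⁺ → 0` in `L¹`, but
the solutions `φₙ(x,t) = sup_{x+[-t,t]^d} φ₀ⁿ` converge in `L¹` to the indicator of
`[-t,t]^d`, of `L¹` norm `(2t)^d ≠ 0`. -/
theorem stmt_5 (d : ℕ) (hd : 1 ≤ d)
    (φ : ℕ → EuclideanSpace ℝ (Fin d) → ℝ)
    (hφ : ∀ n x, φ n x = max (1 - (n : ℝ) * ‖x‖) 0)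
    (Φ : ℕ → ℝ → EuclideanSpace ℝ (Fin d) → ℝ)
    (hΦ : ∀ n t x, Φ n t x = sSup ((φ n) '' {y | ∀ i, |y i - x i| ≤ t})) :
    Tendsto (fun n => ∫⁻ x : EuclideanSpace ℝ (Fin d), ENNReal.ofReal (φ n x))
      atTop (𝓝 0) ∧
    ∀ t : ℝ, 0 < t →
      (Tendsto (fun n => ∫⁻ x : EuclideanSpace ℝ (Fin d),
            ENNReal.ofReal
              |Φ n t x - Set.indicator {y : EuclideanSpace ℝ (Fin d) | ∀ i, |y i| ≤ t}
                (fun _ => (1 : ℝ)) x|)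
          atTop (𝓝 0) ∧
       Tendsto (fun n => ∫⁻ x : EuclideanSpace ℝ (Fin d), ENNReal.ofReal (Φ n t x))
          atTop (𝓝 (ENNReal.ofReal ((2 * t) ^ d)))) := by
  have hφ0 : ∀ (n : ℕ) x, 0 ≤ φ n x := fun n x => by rw [hφ]; exact le_max_right _ _
  have hφ1 : ∀ n x, φ n x ≤ 1 := by
    intro n x; rw [hφ]
    have : 0 ≤ (n:ℝ) * ‖x‖ := mul_nonneg (Nat.cast_nonneg n) (norm_nonneg x)
    apply max_le (by linarith) zero_le_one
  have hbdd : ∀ n (S : Set (Euc d)), BddAbove (φ n '' S) := by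
    intro n S
    refine ⟨1, ?_⟩
    rintro _ ⟨y, _, rfl⟩
    exact hφ1 n y
  have hΦmem : ∀ (n : ℕ) (t : ℝ) (x y : Euc d), (∀ i, |y i - x i| ≤ t) → φ n y ≤ Φ n t x := by
    intro n t x y hy
    rw [hΦ]
    exact le_csSup (hbdd n _) ⟨y, hy, rfl⟩
  have hΦ0 : ∀ (n : ℕ) (t : ℝ) (x : Euc d), 0 ≤ t → 0 ≤ Φ n t x := by
    intro n t x ht
    exact le_trans (hφ0 n x) (hΦmem n t x x (fun i => by simp [ht]))
  have hΦ1 : ∀ (n : ℕ) (t : ℝ) (x : Euc d), Φ n t x ≤ 1 := by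
    intro n t x
    rw [hΦ]
    apply Real.sSup_le _ zero_le_one
    rintro _ ⟨y, _, rfl⟩
    exact hφ1 n y
  have hΦeq1 : ∀ (n : ℕ) (t : ℝ) (x : Euc d), 0 ≤ t → (∀ i, |x i| ≤ t) → Φ n t x = 1 := by
    intro n t x ht hx
    refine le_antisymm (hΦ1 n t x) ?_
    have h0 : ∀ i, |(0 : Euc d) i - x i| ≤ t := by
      intro i
      have : (0 : Euc d) i = 0 := rfl
      rw [this, zero_sub, abs_neg]
      exact hx i
    have := hΦmem n t x 0 h0
    rw [hφ] at this
    simpa using this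
  have hΦeq0 : ∀ (n : ℕ) (t : ℝ) (x : Euc d), 1 ≤ n → 0 ≤ t → (∃ i, t + (n:ℝ)⁻¹ ≤ |x i|) → Φ n t x = 0 := by
    intro n t x hn ht ⟨i, hi⟩
    have hnpos : (0:ℝ) < n := by exact_mod_cast Nat.lt_of_lt_of_le Nat.zero_lt_one hn
    refine le_antisymm ?_ (hΦ0 n t x ht)
    rw [hΦ]
    apply Real.sSup_le _ le_rfl
    rintro _ ⟨y, hy, rfl⟩
    rw [hφ]
    apply max_le _ le_rfl
    have h1 : |x i| - |y i| ≤ |x i - y i| := abs_sub_abs_le_abs_sub _ _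
    have h2 : |x i - y i| = |y i - x i| := abs_sub_comm _ _
    have h3 : (n:ℝ)⁻¹ ≤ |y i| := by
      have := hy i; linarith [h1, h2 ▸ h1]
    have h4 : (n:ℝ)⁻¹ ≤ ‖y‖ := le_trans h3 (coord_le_norm y i)
    have h5 : (1:ℝ) ≤ (n:ℝ) * ‖y‖ := by
      calc (1:ℝ) = (n:ℝ) * (n:ℝ)⁻¹ := by field_simp
      _ ≤ (n:ℝ) * ‖y‖ := by exact mul_le_mul_of_nonneg_left h4 (le_of_lt hnpos)
    linarith
  -- tendsto of (n:ℝ)⁻¹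
  have hinv : Tendsto (fun n : ℕ => (n:ℝ)⁻¹) atTop (𝓝 0) :=
    tendsto_inv_atTop_zero.comp tendsto_natCast_atTop_atTop
  constructor
  · -- part 1
    have key : ∀ n : ℕ, 1 ≤ n →
        (∫⁻ x : Euc d, ENNReal.ofReal (φ n x)) ≤ ENNReal.ofReal ((2*(n:ℝ)⁻¹)^d) := by
      intro n hn
      have hnpos : (0:ℝ) < n := by exact_mod_cast Nat.lt_of_lt_of_le Nat.zero_lt_one hn
      have hb : ∀ x : Euc d, ENNReal.ofReal (φ n x)
          ≤ Set.indicator {x : Euc d | ∀ i, |x i| ≤ (n:ℝ)⁻¹} (fun _ => (1:ENNReal)) x := by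
        intro x
        by_cases hx : x ∈ {x : Euc d | ∀ i, |x i| ≤ (n:ℝ)⁻¹}
        · rw [Set.indicator_of_mem hx]
          calc ENNReal.ofReal (φ n x) ≤ ENNReal.ofReal 1 :=
              ENNReal.ofReal_le_ofReal (hφ1 n x)
          _ = 1 := by simp
        · rw [Set.indicator_of_notMem hx]
          simp only [Set.mem_setOf_eq, not_forall, not_le] at hx
          obtain ⟨i, hi⟩ := hx
          have h4 : (n:ℝ)⁻¹ < ‖x‖ := lt_of_lt_of_le hi (coord_le_norm x i)
          have h5 : (1:ℝ) ≤ (n:ℝ) * ‖x‖ := by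
            calc (1:ℝ) = (n:ℝ) * (n:ℝ)⁻¹ := by field_simp
            _ ≤ (n:ℝ) * ‖x‖ := mul_le_mul_of_nonneg_left h4.le hnpos.le
          have : φ n x = 0 := by
            rw [hφ]; apply max_eq_right; linarith
          simp [this]
      calc (∫⁻ x : Euc d, ENNReal.ofReal (φ n x))
          ≤ ∫⁻ x : Euc d, Set.indicator {x : Euc d | ∀ i, |x i| ≤ (n:ℝ)⁻¹} (fun _ => (1:ENNReal)) x :=
            lintegral_mono hb
        _ = volume {x : Euc d | ∀ i, |x i| ≤ (n:ℝ)⁻¹} := by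
            rw [lintegral_indicator (cube_meas _) _]; simp
        _ = ENNReal.ofReal ((2*(n:ℝ)⁻¹)^d) := cube_vol _ (by positivity)
    have hup : Tendsto (fun n : ℕ => ENNReal.ofReal ((2*(n:ℝ)⁻¹)^d)) atTop (𝓝 0) := by
      have h1 : Tendsto (fun n : ℕ => (2*(n:ℝ)⁻¹)^d) atTop (𝓝 ((2*(0:ℝ))^d)) :=
        (hinv.const_mul 2).pow d
      have h2 : ((2*(0:ℝ))^d) = 0 := by
        simp [zero_pow (by omega : d ≠ 0)]
      rw [h2] at h1
      simpa using ENNReal.tendsto_ofReal h1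
    refine tendsto_of_tendsto_of_tendsto_of_le_of_le' tendsto_const_nhds hup
      (Eventually.of_forall fun n => zero_le) ?_
    filter_upwards [eventually_ge_atTop 1] with n hn using key n hn
  · intro t ht
    have hts : ∀ n : ℕ, (0:ℝ) ≤ t + (n:ℝ)⁻¹ := fun n => by positivity
    have hsub : ∀ n : ℕ, {x : Euc d | ∀ i, |x i| ≤ t} ⊆ {x : Euc d | ∀ i, |x i| ≤ t + (n:ℝ)⁻¹} := by
      intro n x hx i
      have : (0:ℝ) ≤ (n:ℝ)⁻¹ := by positivity
      linarith [hx i]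
    -- convergence of upper volume
    have hup : Tendsto (fun n : ℕ => ENNReal.ofReal ((2*(t+(n:ℝ)⁻¹))^d)) atTop
        (𝓝 (ENNReal.ofReal ((2*t)^d))) := by
      have h1 : Tendsto (fun n : ℕ => (2*(t+(n:ℝ)⁻¹))^d) atTop (𝓝 ((2*(t+0))^d)) :=
        ((hinv.const_add t).const_mul 2).pow d
      rw [add_zero] at h1
      exact ENNReal.tendsto_ofReal h1
    constructor
    · -- part 2a
      have key : ∀ n : ℕ, 1 ≤ n →
          (∫⁻ x : Euc d, ENNReal.ofReal
              |Φ n t x - Set.indicator {y : Euc d | ∀ i, |y i| ≤ t} (fun _ => (1:ℝ)) x|)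
            ≤ ENNReal.ofReal ((2*(t+(n:ℝ)⁻¹))^d) - ENNReal.ofReal ((2*t)^d) := by
        intro n hn
        set A := {x : Euc d | ∀ i, |x i| ≤ t + (n:ℝ)⁻¹} with hA
        set B := {x : Euc d | ∀ i, |x i| ≤ t} with hB
        have hb : ∀ x : Euc d, ENNReal.ofReal
            |Φ n t x - Set.indicator B (fun _ => (1:ℝ)) x|
              ≤ Set.indicator (A \ B) (fun _ => (1:ENNReal)) x := by
          intro x
          by_cases hxB : x ∈ B
          · have h1 : Φ n t x = 1 := hΦeq1 n t x ht.le hxB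
            rw [Set.indicator_of_mem hxB, h1]
            simp
          · rw [Set.indicator_of_notMem hxB]
            by_cases hxA : x ∈ A
            · rw [Set.indicator_of_mem (Set.mem_diff_of_mem hxA hxB)]
              have h2 : |Φ n t x - 0| ≤ 1 := by
                rw [sub_zero, abs_of_nonneg (hΦ0 n t x ht.le)]
                exact hΦ1 n t x
              calc ENNReal.ofReal |Φ n t x - 0| ≤ ENNReal.ofReal 1 :=
                  ENNReal.ofReal_le_ofReal h2
              _ = 1 := by simp
            · have hx : ∃ i, t + (n:ℝ)⁻¹ ≤ |x i| := by
                simp only [hA, Set.mem_setOf_eq, not_forall, not_le] at hxA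
                obtain ⟨i, hi⟩ := hxA
                exact ⟨i, hi.le⟩
              have h1 : Φ n t x = 0 := hΦeq0 n t x hn ht.le hx
              rw [h1]
              simp
        have hvol : volume (A \ B) =
            ENNReal.ofReal ((2*(t+(n:ℝ)⁻¹))^d) - ENNReal.ofReal ((2*t)^d) := by
          rw [measure_diff (hsub n) (cube_meas t).nullMeasurableSet
            (by rw [cube_vol t ht.le]; exact ENNReal.ofReal_ne_top),
            cube_vol _ (hts n), cube_vol t ht.le]
        calc (∫⁻ x : Euc d, ENNReal.ofReal
              |Φ n t x - Set.indicator B (fun _ => (1:ℝ)) x|)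
            ≤ ∫⁻ x : Euc d, Set.indicator (A \ B) (fun _ => (1:ENNReal)) x := lintegral_mono hb
          _ = volume (A \ B) := by
              rw [lintegral_indicator ((cube_meas _).diff (cube_meas _)) _]; simp; rfl
          _ = _ := hvol
      have hup0 : Tendsto (fun n : ℕ =>
          ENNReal.ofReal ((2*(t+(n:ℝ)⁻¹))^d) - ENNReal.ofReal ((2*t)^d)) atTop (𝓝 0) := by
        have := ENNReal.Tendsto.sub hup (tendsto_const_nhds
          (x := ENNReal.ofReal ((2*t)^d))) (Or.inr ENNReal.ofReal_ne_top)
        simpa using this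
      refine tendsto_of_tendsto_of_tendsto_of_le_of_le' tendsto_const_nhds hup0
        (Eventually.of_forall fun n => zero_le) ?_
      filter_upwards [eventually_ge_atTop 1] with n hn using key n hn
    · -- part 2b
      have keyLo : ∀ n : ℕ,
          ENNReal.ofReal ((2*t)^d) ≤ ∫⁻ x : Euc d, ENNReal.ofReal (Φ n t x) := by
        intro n
        have hb : ∀ x : Euc d,
            Set.indicator {x : Euc d | ∀ i, |x i| ≤ t} (fun _ => (1:ENNReal)) x
              ≤ ENNReal.ofReal (Φ n t x) := by
          intro x
          by_cases hx : x ∈ {x : Euc d | ∀ i, |x i| ≤ t}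
          · rw [Set.indicator_of_mem hx, hΦeq1 n t x ht.le hx]
            simp
          · rw [Set.indicator_of_notMem hx]
            exact zero_le
        calc ENNReal.ofReal ((2*t)^d) = volume {x : Euc d | ∀ i, |x i| ≤ t} :=
            (cube_vol t ht.le).symm
          _ = ∫⁻ x : Euc d, Set.indicator {x : Euc d | ∀ i, |x i| ≤ t} (fun _ => (1:ENNReal)) x := by
              rw [lintegral_indicator (cube_meas _) _]; simp
          _ ≤ _ := lintegral_mono hb
      have keyHi : ∀ n : ℕ, 1 ≤ n →
          (∫⁻ x : Euc d, ENNReal.ofReal (Φ n t x)) ≤ ENNReal.ofReal ((2*(t+(n:ℝ)⁻¹))^d) := by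
        intro n hn
        have hb : ∀ x : Euc d, ENNReal.ofReal (Φ n t x)
            ≤ Set.indicator {x : Euc d | ∀ i, |x i| ≤ t + (n:ℝ)⁻¹} (fun _ => (1:ENNReal)) x := by
          intro x
          by_cases hx : x ∈ {x : Euc d | ∀ i, |x i| ≤ t + (n:ℝ)⁻¹}
          · rw [Set.indicator_of_mem hx]
            calc ENNReal.ofReal (Φ n t x) ≤ ENNReal.ofReal 1 :=
                ENNReal.ofReal_le_ofReal (hΦ1 n t x)
            _ = 1 := by simp
          · rw [Set.indicator_of_notMem hx]
            have hxe : ∃ i, t + (n:ℝ)⁻¹ ≤ |x i| := by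
              simp only [Set.mem_setOf_eq, not_forall, not_le] at hx
              obtain ⟨i, hi⟩ := hx
              exact ⟨i, hi.le⟩
            rw [hΦeq0 n t x hn ht.le hxe]
            simp
        calc (∫⁻ x : Euc d, ENNReal.ofReal (Φ n t x))
            ≤ ∫⁻ x : Euc d, Set.indicator {x : Euc d | ∀ i, |x i| ≤ t + (n:ℝ)⁻¹}
                (fun _ => (1:ENNReal)) x := lintegral_mono hb
          _ = volume {x : Euc d | ∀ i, |x i| ≤ t + (n:ℝ)⁻¹} := by
              rw [lintegral_indicator (cube_meas _) _]; simp
          _ = _ := cube_vol _ (hts n)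
      refine tendsto_of_tendsto_of_tendsto_of_le_of_le' tendsto_const_nhds hup
        (Eventually.of_forall keyLo) ?_
      filter_upwards [eventually_ge_atTop 1] with n hn using keyHi n hn
end

section
/- Let ν > 0, η ≥ 0, and for t, s ≥ 0 with νt + s > 0 define, for x ∈ ℝ^d, Ψ(x; t, s) := U((f(x) − ηt − s)⁺/√(νt + s)), where f(x) := dist(x, [-1,1]^d) and U(r) := c₀∫_r^∞ e^{−σ²/4} dσ, U(0) = 1. Then ∫_{ℝ^d} Ψ(x; t, s) dx = 2^d + Σ_{i=1}^d cᵢ(ηt+s)^i + Σ_{i=1}^d i·cᵢ·√(νt+s)·∫_0^∞ (r√(νt+s) + ηt + s)^{i−1} U(r) dr, where the cᵢ > 0 are the Steiner coefficients satisfying meas{f ≤ r} = 2^d + Σᵢ cᵢ r^i. -/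
open MeasureTheory Set

lemma swap_core {α : Type*} [MeasurableSpace α] (μ : Measure α) [SFinite μ]
    (w g : α → ℝ) (hw : Measurable w) (hg : Measurable g)
    (K : ℝ → ℝ) (hK : Measurable K) :
    ∫⁻ x, (ENNReal.ofReal (w x) *
        ∫⁻ σ in Set.Ici (g x) ∩ Set.Ioi 0, ENNReal.ofReal (K σ)) ∂μ
      = ∫⁻ σ in Set.Ioi 0, ENNReal.ofReal (K σ) *
          ∫⁻ x in {x | g x ≤ σ}, ENNReal.ofReal (w x) ∂μ := by
  set S : Set (α × ℝ) := {p | g p.1 ≤ p.2 ∧ 0 < p.2} with hS_def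
  have hSm : MeasurableSet S := by
    have h1 : MeasurableSet {p : α × ℝ | g p.1 ≤ p.2} :=
      measurableSet_le (hg.comp measurable_fst) measurable_snd
    have h2 : MeasurableSet {p : α × ℝ | 0 < p.2} :=
      measurableSet_lt measurable_const measurable_snd
    exact h1.inter h2
  set F : α × ℝ → ENNReal :=
    S.indicator (fun p => ENNReal.ofReal (w p.1) * ENNReal.ofReal (K p.2)) with hF_def
  have hFm : Measurable F :=
    (Measurable.mul ((ENNReal.measurable_ofReal.comp hw).comp measurable_fst)
      ((ENNReal.measurable_ofReal.comp hK).comp measurable_snd)).indicator hSm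
  have key := lintegral_lintegral_swap (μ := μ) (ν := (volume : Measure ℝ))
    (f := fun x σ => F (x, σ)) (hFm.comp measurable_id).aemeasurable
  have hL : ∀ x, (∫⁻ σ, F (x, σ)) = ENNReal.ofReal (w x) *
      ∫⁻ σ in Set.Ici (g x) ∩ Set.Ioi 0, ENNReal.ofReal (K σ) := by
    intro x
    have : (fun σ => F (x, σ)) =
        (Set.Ici (g x) ∩ Set.Ioi 0).indicator
          (fun σ => ENNReal.ofReal (w x) * ENNReal.ofReal (K σ)) := by
      funext σ
      simp only [hF_def, Set.indicator_apply, Set.mem_setOf_eq, Set.mem_inter_iff,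
        Set.mem_Ici, Set.mem_Ioi, hS_def]
    rw [this, lintegral_indicator (measurableSet_Ici.inter measurableSet_Ioi),
      lintegral_const_mul' _ _ ENNReal.ofReal_ne_top]
  have hR : ∀ σ, (∫⁻ x, F (x, σ) ∂μ) =
      (Set.Ioi (0:ℝ)).indicator (fun σ => ENNReal.ofReal (K σ) *
        ∫⁻ x in {x | g x ≤ σ}, ENNReal.ofReal (w x) ∂μ) σ := by
    intro σ
    by_cases hσ : 0 < σ
    · have : (fun x => F (x, σ)) =
          {x | g x ≤ σ}.indicator (fun x => ENNReal.ofReal (K σ) * ENNReal.ofReal (w x)) := by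
        funext x
        simp only [hF_def, Set.indicator_apply, Set.mem_setOf_eq, hS_def, hσ, and_true]
        split <;> [rw [mul_comm]; rfl]
      rw [this, lintegral_indicator (measurableSet_le hg measurable_const),
        lintegral_const_mul' _ _ ENNReal.ofReal_ne_top,
        Set.indicator_of_mem (Set.mem_Ioi.mpr hσ)]
    · have : (fun x => F (x, σ)) = fun _ => 0 := by
        funext x
        simp only [hF_def, Set.indicator_apply, Set.mem_setOf_eq, hS_def]
        split
        next h => exact absurd h.2 hσ
        next => rfl
      rw [this, lintegral_const, zero_mul,
        Set.indicator_of_notMem (by simpa using hσ)]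
  calc ∫⁻ x, (ENNReal.ofReal (w x) *
        ∫⁻ σ in Set.Ici (g x) ∩ Set.Ioi 0, ENNReal.ofReal (K σ)) ∂μ
      = ∫⁻ x, (∫⁻ σ, F (x, σ)) ∂μ := by simp_rw [hL]
    _ = ∫⁻ σ, ∫⁻ x, F (x, σ) ∂μ := key
    _ = ∫⁻ σ in Set.Ioi 0, ENNReal.ofReal (K σ) *
          ∫⁻ x in {x | g x ≤ σ}, ENNReal.ofReal (w x) ∂μ := by
        simp_rw [hR]; exact lintegral_indicator measurableSet_Ioi _

/-- Coarea computation of `∫ U((f(x) - ηt - s)⁺/√(νt+s)) dx` where `f` is the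
distance to the cube `[-1,1]^d`, via the Steiner coefficients `cᵢ` of the cube. -/
theorem stmt_17 (d : ℕ) (hd : 1 ≤ d) (η ν t s : ℝ)
    (hη : 0 ≤ η) (hν : 0 < ν) (ht : 0 ≤ t) (hs : 0 ≤ s) (hpos : 0 < ν * t + s)
    (c₀ : ℝ) (hc₀ : c₀ = (∫ σ in Set.Ioi (0 : ℝ), Real.exp (-σ ^ 2 / 4))⁻¹)
    (U : ℝ → ℝ) (hU : ∀ r, U r = c₀ * ∫ σ in Set.Ioi r, Real.exp (-σ ^ 2 / 4))
    (f : EuclideanSpace ℝ (Fin d) → ℝ)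
    (hf : ∀ x, f x = Metric.infDist x {y : EuclideanSpace ℝ (Fin d) | ∀ i, |y i| ≤ 1})
    (c : ℕ → ℝ) (hcpos : ∀ i ∈ Finset.Icc 1 d, 0 < c i)
    (hc : ∀ r : ℝ, 0 ≤ r →
      volume {x : EuclideanSpace ℝ (Fin d) | f x ≤ r}
        = ENNReal.ofReal (2 ^ d + ∑ i ∈ Finset.Icc 1 d, c i * r ^ i)) :
    ∫ x : EuclideanSpace ℝ (Fin d),
        U (max (f x - η * t - s) 0 / Real.sqrt (ν * t + s))
      = 2 ^ d + (∑ i ∈ Finset.Icc 1 d, c i * (η * t + s) ^ i)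
        + ∑ i ∈ Finset.Icc 1 d, (i : ℝ) * c i * Real.sqrt (ν * t + s) *
            ∫ r in Set.Ioi (0 : ℝ),
              (r * Real.sqrt (ν * t + s) + η * t + s) ^ (i - 1) * U r := by
  set sb := Real.sqrt (ν * t + s) with hsb_def
  have hsb : 0 < sb := Real.sqrt_pos.mpr hpos
  set a := η * t + s with ha_def
  have ha : 0 ≤ a := by positivity
  set K : ℝ → ℝ := fun σ => Real.exp (-σ ^ 2 / 4) with hK_def
  have hKm : Measurable K := by fun_prop
  have hKcont : Continuous K := by fun_prop
  have hKnn : ∀ σ, 0 ≤ K σ := fun σ => (Real.exp_pos _).le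
  have hKint : Integrable K := by
    refine (integrable_exp_neg_mul_sq (by norm_num : (0:ℝ) < 1/4)).congr
      (Filter.Eventually.of_forall fun x => ?_)
    show Real.exp (-(1/4) * x ^ 2) = K x
    rw [hK_def]; norm_num; congr 1; ring
  set W : ℝ → ℝ := fun r => ∫ σ in Set.Ioi r, K σ with hW_def
  have hWnn : ∀ r, 0 ≤ W r := fun r =>
    setIntegral_nonneg measurableSet_Ioi fun σ _ => hKnn σ
  have hWanti : Antitone W := by
    intro r r' h
    exact setIntegral_mono_set hKint.integrableOn
      (Filter.Eventually.of_forall fun σ => hKnn σ)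
      (HasSubset.Subset.eventuallyLE (Set.Ioi_subset_Ioi h))
  have hWm : Measurable W := hWanti.measurable
  have hUW : ∀ r, U r = c₀ * W r := hU
  have hW0pos : 0 < W 0 := by
    rw [hW_def]
    rw [setIntegral_pos_iff_support_of_nonneg_ae
      (Filter.Eventually.of_forall fun σ => hKnn σ) hKint.integrableOn]
    have hsupp : Function.support K ∩ Set.Ioi 0 = Set.Ioi (0:ℝ) :=
      Set.inter_eq_right.mpr fun σ _ => (Real.exp_pos _).ne'
    rw [hsupp, Real.volume_Ioi]
    exact ENNReal.zero_lt_top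
  have hc₀pos : 0 < c₀ := by rw [hc₀]; exact inv_pos.mpr hW0pos
  have hc₀W : c₀ * W 0 = 1 := by
    rw [hc₀]; exact inv_mul_cancel₀ (ne_of_gt hW0pos)
  have hUnn : ∀ r, 0 ≤ U r := fun r => by
    rw [hUW r]; exact mul_nonneg hc₀pos.le (hWnn r)
  have hfc : Continuous f := by
    have : f = fun x => Metric.infDist x {y : EuclideanSpace ℝ (Fin d) | ∀ i, |y i| ≤ 1} :=
      funext hf
    rw [this]; exact Metric.continuous_infDist_pt _
  have hfm : Measurable f := hfc.measurable
  -- gaussian moments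
  have hmom : ∀ n : ℕ, IntegrableOn (fun σ => σ ^ n * K σ) (Set.Ioi 0) := by
    intro n
    refine (integrableOn_rpow_mul_exp_neg_mul_sq (by norm_num : (0:ℝ) < 1/4)
      (s := (n:ℝ)) (lt_of_lt_of_le neg_one_lt_zero (Nat.cast_nonneg n))).congr_fun
      (fun x hx => ?_) measurableSet_Ioi
    simp only [Real.rpow_natCast]
    show x ^ n * Real.exp (-(1/4) * x ^ 2) = x ^ n * K x
    rw [hK_def]; norm_num; left; congr 1; ring
  have hKP : ∀ (m : ℕ) (u v : ℝ), IntegrableOn (fun σ => (u + σ * v) ^ m * K σ) (Set.Ioi 0) := by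
    intro m u v
    have heq : (fun σ : ℝ => (u + σ * v) ^ m * K σ)
        = fun σ => ∑ k ∈ Finset.range (m+1),
            (u ^ k * v ^ (m-k) * (m.choose k : ℝ)) * (σ ^ (m-k) * K σ) := by
      funext σ
      rw [add_pow, Finset.sum_mul]
      exact Finset.sum_congr rfl fun k _ => by rw [mul_pow]; ring
    rw [heq]
    exact integrable_finset_sum _ fun k _ => (hmom (m-k)).const_mul _
  -- ae set identity
  have hIciIoi : ∀ z : ℝ, (Set.Ici z ∩ Set.Ioi 0 : Set ℝ) =ᵐ[volume] Set.Ioi (max z 0) := by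
    intro z
    rw [MeasureTheory.ae_eq_set]
    constructor
    · refine measure_mono_null (fun σ hσ => ?_) (Real.volume_singleton (a := max z 0))
      obtain ⟨⟨h1, h2⟩, h3⟩ := hσ
      simp only [Set.mem_Ici, Set.mem_Ioi, Set.mem_inter_iff] at h1 h2 h3 ⊢
      have hσle : σ ≤ max z 0 := not_lt.mp h3
      have : 0 < max z 0 := lt_of_lt_of_le h2 hσle
      have hz0 : max z 0 = z := by
        rcases max_cases z 0 with ⟨h, _⟩ | ⟨h, hzle⟩
        · exact h
        · exact absurd (h ▸ this) (lt_irrefl _)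
      rw [Set.mem_singleton_iff, hz0]
      rw [hz0] at hσle
      exact le_antisymm hσle h1
    · refine measure_mono_null (fun σ hσ => ?_) (measure_empty (μ := volume))
      obtain ⟨h1, h2⟩ := hσ
      simp only [Set.mem_Ioi] at h1
      exact absurd ⟨le_of_lt (lt_of_le_of_lt (le_max_left z 0) h1),
        lt_of_le_of_lt (le_max_right z 0) h1⟩ h2
  have hWmax : ∀ z : ℝ, ENNReal.ofReal (W (max z 0))
      = ∫⁻ σ in Set.Ici z ∩ Set.Ioi 0, ENNReal.ofReal (K σ) := by
    intro z
    rw [setLIntegral_congr (hIciIoi z)]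
    rw [hW_def]
    exact ofReal_integral_eq_lintegral_ofReal hKint.integrableOn
      (Filter.Eventually.of_forall fun σ => hKnn σ)
  -- polynomial
  set P : ℝ → ℝ := fun R => 2 ^ d + ∑ i ∈ Finset.Icc 1 d, c i * R ^ i with hP_def
  have hPnn : ∀ R : ℝ, 0 ≤ R → 0 ≤ P R := fun R hR =>
    add_nonneg (by positivity)
      (Finset.sum_nonneg fun i hi => mul_nonneg (hcpos i hi).le (pow_nonneg hR i))
  have hPcont : Continuous P :=
    continuous_const.add
      (continuous_finset_sum _ fun i _ => continuous_const.mul (continuous_pow i))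
  -- step A
  set g : EuclideanSpace ℝ (Fin d) → ℝ := fun x => (f x - a) / sb with hg_def
  have hgm : Measurable g := (hfm.sub measurable_const).div_const sb
  have hUe : ∀ x, U (max (f x - η * t - s) 0 / sb) = c₀ * W (max (g x) 0) := by
    intro x
    have h1 : f x - η * t - s = f x - a := by rw [ha_def]; ring
    have h2 : max (f x - a) 0 / sb = max ((f x - a) / sb) 0 := by
      rw [← max_div_div_right hsb.le, zero_div]
    rw [h1, h2, hUW]
  have hM : ∫ x : EuclideanSpace ℝ (Fin d), U (max (f x - η * t - s) 0 / sb)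
      = c₀ * ∫ σ in Set.Ioi 0, K σ * P (a + σ * sb) := by
    have hcore := swap_core (volume : Measure (EuclideanSpace ℝ (Fin d)))
      (fun _ => 1) g measurable_const hgm K hKm
    simp only [ENNReal.ofReal_one, one_mul, setLIntegral_one] at hcore
    have hstep1 : ∫ x : EuclideanSpace ℝ (Fin d), U (max (f x - η * t - s) 0 / sb)
        = c₀ * ∫ x : EuclideanSpace ℝ (Fin d), W (max (g x) 0) := by
      rw [← integral_const_mul]
      exact integral_congr_ae (Filter.Eventually.of_forall hUe)
    rw [hstep1]
    congr 1
    have hmeas : AEStronglyMeasurable (fun x => W (max (g x) 0))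
        (volume : Measure (EuclideanSpace ℝ (Fin d))) :=
      (hWm.comp (hgm.max measurable_const)).aestronglyMeasurable
    rw [integral_eq_lintegral_of_nonneg_ae
      (Filter.Eventually.of_forall fun x => hWnn _) hmeas]
    have hlhs : (∫⁻ x : EuclideanSpace ℝ (Fin d), ENNReal.ofReal (W (max (g x) 0)))
        = ∫⁻ σ in Set.Ioi 0, ENNReal.ofReal (K σ)
            * volume {x : EuclideanSpace ℝ (Fin d) | g x ≤ σ} := by
      rw [← hcore]
      exact lintegral_congr fun x => hWmax (g x)
    rw [hlhs]
    have hset : ∀ σ : ℝ, 0 < σ → {x : EuclideanSpace ℝ (Fin d) | g x ≤ σ}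
        = {x : EuclideanSpace ℝ (Fin d) | f x ≤ a + σ * sb} := by
      intro σ hσ
      ext x
      simp only [Set.mem_setOf_eq, hg_def]
      rw [div_le_iff₀ hsb]
      constructor <;> intro h <;> linarith
    have h2 : (∫⁻ σ in Set.Ioi (0:ℝ), ENNReal.ofReal (K σ)
          * volume {x : EuclideanSpace ℝ (Fin d) | g x ≤ σ})
        = ∫⁻ σ in Set.Ioi (0:ℝ), ENNReal.ofReal (K σ * P (a + σ * sb)) := by
      refine setLIntegral_congr_fun measurableSet_Ioi
        (fun σ hσ => ?_)
      have hσ' : (0:ℝ) < σ := hσ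
      rw [hset σ hσ', hc (a + σ * sb)
        (add_nonneg ha (mul_nonneg hσ'.le hsb.le)),
        ENNReal.ofReal_mul (hKnn σ)]
    rw [h2]
    refine (integral_eq_lintegral_of_nonneg_ae ?_ ?_).symm
    · refine (ae_restrict_iff' measurableSet_Ioi).mpr
        (Filter.Eventually.of_forall fun σ hσ => ?_)
      exact mul_nonneg (hKnn σ)
        (hPnn _ (add_nonneg ha (mul_nonneg (le_of_lt hσ) hsb.le)))
    · exact (hKcont.mul (hPcont.comp
        (continuous_const.add (continuous_id.mul continuous_const)))).aestronglyMeasurable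
  -- step B
  have hJ : ∀ i : ℕ, 1 ≤ i → i ≤ d →
      (∫ r in Set.Ioi (0:ℝ), (r * sb + η * t + s) ^ (i-1) * U r)
        = c₀ * ∫ σ in Set.Ioi (0:ℝ),
            K σ * (((a + σ * sb) ^ i - a ^ i) / ((i:ℝ) * sb)) := by
    intro i hi1 hid
    have hine : ((i:ℝ)) ≠ 0 := Nat.cast_ne_zero.mpr (by omega)
    set w : ℝ → ℝ := fun r => (r * sb + a) ^ (i-1) with hw_def
    have hwm : Measurable w := by rw [hw_def]; fun_prop
    have hwcont : Continuous w := by rw [hw_def]; fun_prop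
    have hwnn : ∀ r : ℝ, 0 ≤ r → 0 ≤ w r := fun r hr => by
      simp only [hw_def]
      exact pow_nonneg (add_nonneg (mul_nonneg hr hsb.le) ha) _
    set Q : ℝ → ℝ := fun σ => ((a + σ * sb) ^ i - a ^ i) / ((i:ℝ) * sb) with hQ_def
    have hQcont : Continuous Q := by rw [hQ_def]; fun_prop
    have hQnn : ∀ σ : ℝ, 0 ≤ σ → 0 ≤ Q σ := by
      intro σ hσ
      simp only [hQ_def]
      apply div_nonneg _ (mul_nonneg (Nat.cast_nonneg i) hsb.le)
      have : a ^ i ≤ (a + σ * sb) ^ i :=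
        pow_le_pow_left₀ ha (le_add_of_nonneg_right (mul_nonneg hσ hsb.le)) i
      linarith
    have hQval : ∀ σ : ℝ, 0 < σ → (∫ r in Set.Ioc (0:ℝ) σ, w r) = Q σ := by
      intro σ hσ
      rw [← intervalIntegral.integral_of_le hσ.le]
      have hwe : ∀ r : ℝ, w r = (fun u => u ^ (i-1)) (sb * r + a) := fun r => by
        simp only [hw_def]; rw [mul_comm r sb]
      rw [intervalIntegral.integral_congr (fun r _ => hwe r)]
      rw [intervalIntegral.integral_comp_mul_add (fun u => u ^ (i-1)) (ne_of_gt hsb) a]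
      rw [integral_pow]
      rw [Nat.sub_add_cancel hi1, Nat.cast_sub hi1]
      rw [show ((i:ℝ) - (1:ℕ) + 1) = (i:ℝ) from by push_cast; ring]
      simp only [hQ_def, smul_eq_mul, mul_zero, zero_add]
      field_simp
      ring
    have e1 : (∫ r in Set.Ioi (0:ℝ), (r * sb + η * t + s) ^ (i-1) * U r)
        = c₀ * ∫ r in Set.Ioi (0:ℝ), w r * W r := by
      rw [← integral_const_mul]
      refine integral_congr_ae (Filter.Eventually.of_forall fun r => ?_)
      beta_reduce
      have h0 : r * sb + η * t + s = r * sb + a := by rw [ha_def]; ring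
      rw [h0, hUW]
      simp only [hw_def]
      ring
    rw [e1]
    congr 1
    have hnnL : 0 ≤ᵐ[volume.restrict (Set.Ioi (0:ℝ))] fun r => w r * W r :=
      (ae_restrict_iff' measurableSet_Ioi).mpr (Filter.Eventually.of_forall fun r hr =>
        mul_nonneg (hwnn r (le_of_lt hr)) (hWnn r))
    have hmeasL : AEStronglyMeasurable (fun r => w r * W r)
        (volume.restrict (Set.Ioi (0:ℝ))) := (hwm.mul hWm).aestronglyMeasurable
    have hnnQ : 0 ≤ᵐ[volume.restrict (Set.Ioi (0:ℝ))] fun σ => K σ * Q σ :=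
      (ae_restrict_iff' measurableSet_Ioi).mpr (Filter.Eventually.of_forall fun σ hσ =>
        mul_nonneg (hKnn σ) (hQnn σ (le_of_lt hσ)))
    have hmeasQ : AEStronglyMeasurable (fun σ => K σ * Q σ)
        (volume.restrict (Set.Ioi (0:ℝ))) := (hKcont.mul hQcont).aestronglyMeasurable
    have hcore := swap_core (volume.restrict (Set.Ioi (0:ℝ))) w (fun x => x)
      hwm measurable_id' K hKm
    have hkey : (∫⁻ r in Set.Ioi (0:ℝ), ENNReal.ofReal (w r * W r))
        = ∫⁻ σ in Set.Ioi (0:ℝ), ENNReal.ofReal (K σ * Q σ) := by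
      calc (∫⁻ r in Set.Ioi (0:ℝ), ENNReal.ofReal (w r * W r))
          = ∫⁻ r in Set.Ioi (0:ℝ), (ENNReal.ofReal (w r) *
              ∫⁻ σ in Set.Ici r ∩ Set.Ioi 0, ENNReal.ofReal (K σ)) := by
            refine setLIntegral_congr_fun measurableSet_Ioi
              (fun r hr => ?_)
            have hmx := hWmax r
            rw [max_eq_left (le_of_lt hr)] at hmx
            rw [ENNReal.ofReal_mul (hwnn r (le_of_lt hr)), hmx]
        _ = ∫⁻ σ in Set.Ioi 0, ENNReal.ofReal (K σ) *
              ∫⁻ x in {x : ℝ | x ≤ σ}, ENNReal.ofReal (w x)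
                ∂(volume.restrict (Set.Ioi 0)) := hcore
        _ = ∫⁻ σ in Set.Ioi (0:ℝ), ENNReal.ofReal (K σ * Q σ) := by
            refine setLIntegral_congr_fun measurableSet_Ioi
              (fun σ hσ => ?_)
            have hσ' : (0:ℝ) < σ := hσ
            have hinner : (∫⁻ x in {x : ℝ | x ≤ σ}, ENNReal.ofReal (w x)
                ∂(volume.restrict (Set.Ioi 0))) = ENNReal.ofReal (Q σ) := by
              rw [Measure.restrict_restrict (measurableSet_le measurable_id' measurable_const)]
              have hseteq : {x : ℝ | x ≤ σ} ∩ Set.Ioi 0 = Set.Ioc 0 σ := by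
                ext x
                simp only [Set.mem_inter_iff, Set.mem_setOf_eq, Set.mem_Ioi, Set.mem_Ioc]
                tauto
              rw [hseteq]
              rw [← ofReal_integral_eq_lintegral_ofReal hwcont.integrableOn_Ioc
                ((ae_restrict_iff' measurableSet_Ioc).mpr
                  (Filter.Eventually.of_forall fun r hr => hwnn r (le_of_lt hr.1)))]
              rw [hQval σ hσ']
            rw [hinner, ← ENNReal.ofReal_mul (hKnn σ)]
    calc (∫ r in Set.Ioi (0:ℝ), w r * W r)
        = (∫⁻ r in Set.Ioi (0:ℝ), ENNReal.ofReal (w r * W r)).toReal :=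
          integral_eq_lintegral_of_nonneg_ae hnnL hmeasL
      _ = (∫⁻ σ in Set.Ioi (0:ℝ), ENNReal.ofReal (K σ * Q σ)).toReal := by rw [hkey]
      _ = ∫ σ in Set.Ioi (0:ℝ), K σ * Q σ :=
          (integral_eq_lintegral_of_nonneg_ae hnnQ hmeasQ).symm
  -- assembly
  rw [hM]
  have hint1 : ∀ i ∈ Finset.Icc 1 d,
      IntegrableOn (fun σ => K σ * (c i * ((a + σ * sb) ^ i - a ^ i))) (Set.Ioi 0) := by
    intro i hi
    have heq : (fun σ : ℝ => K σ * (c i * ((a + σ * sb) ^ i - a ^ i)))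
        = fun σ => c i * ((a + σ * sb) ^ i * K σ) - (c i * a ^ i) * K σ :=
      funext fun σ => by ring
    rw [heq]
    exact ((hKP i a sb).const_mul _).sub ((hKint.integrableOn).const_mul _)
  have hterm : ∀ i ∈ Finset.Icc 1 d,
      (i:ℝ) * c i * sb * ∫ r in Set.Ioi (0:ℝ), (r * sb + η * t + s) ^ (i-1) * U r
        = c₀ * ∫ σ in Set.Ioi (0:ℝ), K σ * (c i * ((a + σ * sb) ^ i - a ^ i)) := by
    intro i hi
    obtain ⟨hi1, hid⟩ := Finset.mem_Icc.mp hi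
    have hine : ((i:ℝ)) ≠ 0 := Nat.cast_ne_zero.mpr (by omega)
    rw [hJ i hi1 hid]
    rw [show (i:ℝ) * c i * sb * (c₀ * ∫ σ in Set.Ioi (0:ℝ),
          K σ * (((a + σ * sb) ^ i - a ^ i) / ((i:ℝ) * sb)))
        = c₀ * (((i:ℝ) * c i * sb) * ∫ σ in Set.Ioi (0:ℝ),
          K σ * (((a + σ * sb) ^ i - a ^ i) / ((i:ℝ) * sb))) from by ring]
    rw [← integral_const_mul]
    congr 1
    refine integral_congr_ae (Filter.Eventually.of_forall fun σ => ?_)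
    beta_reduce
    field_simp
  rw [Finset.sum_congr rfl hterm, ← Finset.mul_sum,
    ← integral_finset_sum _ (fun i hi => hint1 i hi)]
  have hsplit : (∫ σ in Set.Ioi (0:ℝ), K σ * P (a + σ * sb))
      = P a * W 0 + ∫ σ in Set.Ioi (0:ℝ),
          ∑ i ∈ Finset.Icc 1 d, K σ * (c i * ((a + σ * sb) ^ i - a ^ i)) := by
    have hPaW : (∫ σ in Set.Ioi (0:ℝ), P a * K σ) = P a * W 0 := integral_const_mul _ _
    rw [← hPaW, ← integral_add ((hKint.integrableOn).const_mul _)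
      (integrable_finset_sum _ (fun i hi => hint1 i hi))]
    refine integral_congr_ae (Filter.Eventually.of_forall fun σ => ?_)
    beta_reduce
    have h1 : (∑ i ∈ Finset.Icc 1 d, K σ * (c i * ((a + σ * sb) ^ i - a ^ i)))
        = K σ * ∑ i ∈ Finset.Icc 1 d, (c i * (a + σ * sb) ^ i - c i * a ^ i) := by
      rw [Finset.mul_sum]
      exact Finset.sum_congr rfl fun i _ => by ring
    rw [h1, Finset.sum_sub_distrib]
    simp only [hP_def]
    ring
  rw [hsplit, mul_add, show c₀ * (P a * W 0) = P a * (c₀ * W 0) from by ring, hc₀W, mul_one]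
end
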